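/- arXiv:1707.06059 — 2 statements merged into one kernel-verified Lean document; each statement's English description precedes it below -/
import Mathlib

section
/- Let Ψ(n) = 2^{n^γ} with 1/2 ≤ γ < 1. Then for every β ∈ (0, ∞), the set E_Ψ(β) = {x ∈ (0,1] : lim_{n→∞} S_n(x)/Ψ(n) = β} is empty. -/
open Filter Set MeasureTheory
open scoped ENNReal Classical

/-- The doubling map on `(0,1]`. -/
noncomputable def T (x : ℝ) : ℝ := 2 * x - ⌈2 * x⌉ + 1

/-- The Saint-Petersburg potential: `phi x = 2^k` for `x ∈ (2^{-k-1}, 2^{-k}]`. -/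
noncomputable def phi (x : ℝ) : ℝ := 2 ^ ⌊Real.logb 2 x⁻¹⌋

/-- Birkhoff sums of the Saint-Petersburg potential under the doubling map. -/
noncomputable def S (n : ℕ) (x : ℝ) : ℝ := ∑ j ∈ Finset.range n, phi (T^[j] x)

/-- The `n`-th binary digit of `x` (for `n ≥ 1`): `eps n x = ⌈2 T^{n-1} x⌉ - 1`. -/
noncomputable def eps (n : ℕ) (x : ℝ) : ℤ := ⌈2 * T^[n-1] x⌉ - 1

noncomputable def kap (y : ℝ) : ℕ := (⌊Real.logb 2 y⁻¹⌋).toNat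

lemma T_mem (x : ℝ) : T x ∈ Set.Ioc (0:ℝ) 1 := by
  constructor
  · have := Int.ceil_lt_add_one (2*x); unfold T; linarith
  · have := Int.le_ceil (2*x); unfold T; linarith

lemma T_iter_mem {x : ℝ} (hx : x ∈ Set.Ioc (0:ℝ) 1) (j : ℕ) : T^[j] x ∈ Set.Ioc (0:ℝ) 1 := by
  induction j with
  | zero => simpa using hx
  | succ n ih => rw [Function.iterate_succ_apply']; exact T_mem _

lemma kap_nonneg {y : ℝ} (hy : y ∈ Set.Ioc (0:ℝ) 1) : 0 ≤ ⌊Real.logb 2 y⁻¹⌋ := by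
  apply Int.floor_nonneg.2
  apply Real.logb_nonneg one_lt_two
  rw [le_inv_comm₀ one_pos hy.1]
  simpa using hy.2

lemma phi_eq {y : ℝ} (hy : y ∈ Set.Ioc (0:ℝ) 1) : phi y = 2 ^ (kap y) := by
  unfold phi kap
  rw [← zpow_natCast, Int.toNat_of_nonneg (kap_nonneg hy)]

lemma phi_ge_one {y : ℝ} (hy : y ∈ Set.Ioc (0:ℝ) 1) : 1 ≤ phi y := by
  rw [phi_eq hy]; exact one_le_pow₀ one_le_two

lemma halve {y : ℝ} (hy : y ∈ Set.Ioc (0:ℝ) 1) (hk : 1 ≤ kap y) :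
    T y = 2*y ∧ kap (T y) = kap y - 1 := by
  have hfl : 1 ≤ ⌊Real.logb 2 y⁻¹⌋ := by unfold kap at hk; omega
  have hlog : 1 ≤ Real.logb 2 y⁻¹ := by
    calc (1:ℝ) ≤ (⌊Real.logb 2 y⁻¹⌋ : ℝ) := by exact_mod_cast hfl
    _ ≤ _ := Int.floor_le _
  have hyinv : (2:ℝ) ≤ y⁻¹ := by
    have h0 : (0:ℝ) < y⁻¹ := inv_pos.2 hy.1
    calc (2:ℝ) = 2 ^ (1:ℝ) := (Real.rpow_one 2).symm
    _ ≤ 2 ^ (Real.logb 2 y⁻¹) := Real.rpow_le_rpow_of_exponent_le one_le_two hlog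
    _ = y⁻¹ := Real.rpow_logb two_pos (by norm_num) h0
  have hy2 : y ≤ 1/2 := by
    rw [show (1:ℝ)/2 = 2⁻¹ by norm_num, le_inv_comm₀ (by norm_num) hy.1] at *
    exact hyinv
  have hceil : ⌈2*y⌉ = 1 := by
    rw [Int.ceil_eq_iff]
    constructor
    · push_cast; linarith [hy.1]
    · push_cast; linarith
  have hT : T y = 2*y := by unfold T; rw [hceil]; push_cast; ring
  refine ⟨hT, ?_⟩
  have hlogT : Real.logb 2 (2*y)⁻¹ = Real.logb 2 y⁻¹ - 1 := by
    rw [mul_inv, Real.logb_mul (by norm_num) (by positivity)]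
    simp [Real.logb_self_eq_one]
    ring
  unfold kap
  rw [hT, hlogT, show (1:ℝ) = ((1:ℤ):ℝ) by norm_num, Int.floor_sub_intCast]
  omega

lemma kap_iter {y : ℝ} (hy : y ∈ Set.Ioc (0:ℝ) 1) :
    ∀ j ≤ kap y, kap (T^[j] y) = kap y - j := by
  intro j hj
  induction j with
  | zero => simp
  | succ n ih =>
      have hn : n ≤ kap y := by omega
      have h1 : kap (T^[n] y) = kap y - n := ih hn
      have h2 : 1 ≤ kap (T^[n] y) := by omega
      rw [Function.iterate_succ_apply', (halve (T_iter_mem hy n) h2).2, h1]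
      omega

lemma S_run_le {y : ℝ} (hy : y ∈ Set.Ioc (0:ℝ) 1) {m : ℕ} (hm : m ≤ kap y + 1) :
    S m y ≤ 2 * phi y := by
  have : S m y = ∑ j ∈ Finset.range m, (2:ℝ) ^ (kap y - j) := by
    unfold S
    apply Finset.sum_congr rfl
    intro j hj
    have hj' : j ≤ kap y := by
      have := Finset.mem_range.1 hj; omega
    rw [phi_eq (T_iter_mem hy j), kap_iter hy j hj']
  rw [this, phi_eq hy]
  have hb : ∀ j ∈ Finset.range m, (2:ℝ) ^ (kap y - j) ≤ 2 ^ (kap y) * (1/2)^j := by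
    intro j hj
    have hj' : j ≤ kap y := by have := Finset.mem_range.1 hj; omega
    rw [pow_sub₀ (2:ℝ) (by norm_num) hj']
    rw [div_pow, one_pow]
    simp
  calc ∑ j ∈ Finset.range m, (2:ℝ) ^ (kap y - j)
      ≤ ∑ j ∈ Finset.range m, (2:ℝ)^(kap y) * (1/2)^j := Finset.sum_le_sum hb
    _ = 2^(kap y) * ∑ j ∈ Finset.range m, ((1:ℝ)/2)^j := by rw [Finset.mul_sum]
    _ ≤ 2^(kap y) * 2 := by
        have := sum_geometric_two_le m
        have h0 : (0:ℝ) ≤ 2^(kap y) := by positivity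
        nlinarith
    _ = 2 * 2^(kap y) := by ring

lemma S_cocycle (x : ℝ) (n p : ℕ) : S (n + p) x = S n x + S p (T^[n] x) := by
  unfold S
  rw [Finset.sum_range_add]
  congr 1
  apply Finset.sum_congr rfl
  intro i _
  rw [← Function.iterate_add_apply, add_comm i n]

lemma S_mono {x : ℝ} (hx : x ∈ Set.Ioc (0:ℝ) 1) {m n : ℕ} (h : m ≤ n) : S m x ≤ S n x := by
  unfold S
  apply Finset.sum_le_sum_of_subset_of_nonneg (Finset.range_subset_range.2 h)
  intro j _ _
  exact le_trans zero_le_one (phi_ge_one (T_iter_mem hx j))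

lemma bern_up {p a b : ℝ} (hp0 : 0 ≤ p) (hp1 : p ≤ 1) (ha : 1 ≤ a) (hb : 0 ≤ b) :
    (a+b)^p ≤ a^p + p * b * (a^p / a) := by
  have ha0 : (0:ℝ) < a := lt_of_lt_of_le one_pos ha
  have h1 : (1 + b/a)^p ≤ 1 + p*(b/a) :=
    rpow_one_add_le_one_add_mul_self (le_trans (by norm_num) (by positivity : (0:ℝ) ≤ b/a)) hp0 hp1
  have h2 : a + b = a * (1 + b/a) := by field_simp
  calc (a+b)^p = a^p * (1+b/a)^p := by
        rw [h2, Real.mul_rpow (le_of_lt ha0) (by positivity)]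
    _ ≤ a^p * (1 + p*(b/a)) :=
        mul_le_mul_of_nonneg_left h1 (Real.rpow_nonneg (le_of_lt ha0) p)
    _ = a^p + p * b * (a^p/a) := by field_simp

lemma bern_low {p a b : ℝ} (hp0 : 0 ≤ p) (hp1 : p ≤ 1) (ha : 0 < a) (hb : 0 ≤ b) :
    a^p + p * b * ((a+b)^p / (a+b)) ≤ (a+b)^p := by
  have hu : (0:ℝ) < a + b := by linarith
  have hs : -1 ≤ -(b/(a+b)) := by
    rw [neg_le_neg_iff]
    rw [div_le_one hu]
    linarith
  have h1 : (1 + -(b/(a+b)))^p ≤ 1 + p * -(b/(a+b)) :=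
    rpow_one_add_le_one_add_mul_self hs hp0 hp1
  have h2 : 1 + -(b/(a+b)) = a/(a+b) := by field_simp; ring
  rw [h2] at h1
  have h3 : (a/(a+b))^p = a^p/(a+b)^p := Real.div_rpow (le_of_lt ha) (le_of_lt hu) p
  rw [h3] at h1
  have h4 : (0:ℝ) < (a+b)^p := Real.rpow_pos_of_pos hu p
  have h5 := mul_le_mul_of_nonneg_right h1 (le_of_lt h4)
  rw [div_mul_cancel₀ _ (ne_of_gt h4)] at h5
  calc a^p + p * b * ((a+b)^p / (a+b))
      = a^p + (p * (b/(a+b))) * (a+b)^p := by ring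
    _ ≤ (a+b)^p := by nlinarith [h5]

lemma key_exponent {γ a b : ℝ} (hγ1 : 1/2 ≤ γ) (hγ2 : γ < 1) (ha : 1 ≤ a) (hb : 0 ≤ b)
    (h : (a+b)^γ ≤ a^γ + 1/8) : b ≤ (1/3)*a^γ := by
  have hγ0 : (0:ℝ) < γ := by linarith
  have hlow := bern_low (le_of_lt hγ0) (le_of_lt hγ2) (lt_of_lt_of_le one_pos ha) hb
  have h5 : γ*b*((a+b)^γ/(a+b)) ≤ 1/8 := by linarith
  have hu0 : (0:ℝ) < a + b := by linarith
  have hu1 : (1:ℝ) ≤ a + b := by linarith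
  have hupos : (0:ℝ) < (a+b)^γ := Real.rpow_pos_of_pos hu0 γ
  have hX0 : (0:ℝ) ≤ b*((a+b)^γ/(a+b)) := by positivity
  have h6 : b*((a+b)^γ/(a+b)) ≤ 1/4 := by nlinarith
  have h7 : b*(a+b)^γ ≤ (1/4)*(a+b) := by
    have hmm := mul_le_mul_of_nonneg_right h6 (le_of_lt hu0)
    calc b*(a+b)^γ = b*((a+b)^γ/(a+b)) * (a+b) := by field_simp
    _ ≤ (1/4)*(a+b) := hmm
  have hsplit : (a+b) = (a+b)^γ * (a+b)^(1-γ) := by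
    rw [← Real.rpow_add hu0]
    norm_num
  have h8 : b ≤ (1/4)*(a+b)^(1-γ) := by
    have he : (a+b)^(1-γ) = (a+b)/(a+b)^γ := by
      rw [Real.rpow_sub hu0, Real.rpow_one]
    rw [he, show (1:ℝ)/4 * ((a+b)/(a+b)^γ) = (1/4*(a+b))/(a+b)^γ by ring, le_div_iff₀ hupos]
    linarith
  have h9 : (a+b)^(1-γ) ≤ (a+b)^γ := Real.rpow_le_rpow_of_exponent_le hu1 (by linarith)
  have hup := bern_up (le_of_lt hγ0) (le_of_lt hγ2) ha hb
  have haγa : a^γ ≤ a := by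
    calc a^γ ≤ a^(1:ℝ) := Real.rpow_le_rpow_of_exponent_le ha (le_of_lt hγ2)
    _ = a := Real.rpow_one a
  have haγ0 : (0:ℝ) < a^γ := Real.rpow_pos_of_pos (by linarith) γ
  have h10 : γ*b*(a^γ/a) ≤ b := by
    have hr1 : a^γ/a ≤ 1 := by
      rw [div_le_one (by linarith)]; exact haγa
    have hr0 : (0:ℝ) ≤ a^γ/a := by positivity
    nlinarith [mul_le_mul_of_nonneg_left hr1 (mul_nonneg (le_of_lt hγ0) hb),
      mul_le_mul_of_nonneg_right (le_of_lt hγ2) hb]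
  have h11 : b ≤ (1/4)*(a^γ + b) := by nlinarith
  linarith


set_option maxHeartbeats 1000000 in
theorem saint_petersburg_stmt13 (γ : ℝ) (hγ1 : 1 / 2 ≤ γ) (hγ2 : γ < 1)
    (β : ℝ) (hβ : 0 < β) :
    {x : ℝ | x ∈ Set.Ioc (0 : ℝ) 1 ∧
      Filter.Tendsto (fun n : ℕ => S n x / (2 : ℝ) ^ ((n : ℝ) ^ γ))
        Filter.atTop (nhds β)} = ∅ := by
  rw [Set.eq_empty_iff_forall_notMem]
  rintro x ⟨hx, hlim⟩
  have hγ0 : 0 < γ := lt_of_lt_of_le (by norm_num) hγ1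
  set Ψ : ℕ → ℝ := fun n => (2:ℝ) ^ ((n:ℝ)^γ) with hΨdef
  have hΨpos : ∀ n, 0 < Ψ n := fun n => Real.rpow_pos_of_pos two_pos _
  -- Step A : two-sided bounds
  obtain ⟨N1, hN1⟩ := Metric.tendsto_atTop.1 hlim (β/200) (by positivity)
  have hA : ∀ n, N1 ≤ n → (199/200)*β*Ψ n ≤ S n x ∧ S n x ≤ (201/200)*β*Ψ n := by
    intro n hn
    have h := hN1 n hn
    rw [Real.dist_eq, abs_lt] at h
    have h0 := hΨpos n
    have hq : S n x = (S n x / Ψ n) * Ψ n := (div_mul_cancel₀ _ (ne_of_gt h0)).symm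
    constructor
    · rw [hq]; nlinarith [h.1]
    · rw [hq]; nlinarith [h.2]
  have hcast : Tendsto (fun n:ℕ => (n:ℝ)) atTop atTop := tendsto_natCast_atTop_atTop
  -- Step B : increments of n^γ tend to 0
  have hd0 : Tendsto (fun n:ℕ => ((n:ℝ)+1)^γ - (n:ℝ)^γ) atTop (nhds 0) := by
    have hg : Tendsto (fun n:ℕ => (n:ℝ)^(γ-1)) atTop (nhds 0) := by
      have h := (tendsto_rpow_neg_atTop (y := 1-γ) (by linarith)).comp hcast
      have he : (fun n:ℕ => (n:ℝ)^(γ-1)) = (fun t:ℝ => t^(-(1-γ))) ∘ (fun n:ℕ => (n:ℝ)) := by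
        funext n; simp [neg_sub]
      rw [he]; exact h
    apply squeeze_zero' (g := fun n:ℕ => (n:ℝ)^(γ-1)) _ _ hg
    · filter_upwards [eventually_ge_atTop 0] with n _
      have h1 : ((n:ℝ)) ≤ (n:ℝ)+1 := by linarith
      have := Real.rpow_le_rpow (Nat.cast_nonneg n) h1 (le_of_lt hγ0)
      linarith
    · filter_upwards [eventually_ge_atTop 1] with n hn
      have hn1 : (1:ℝ) ≤ (n:ℝ) := by exact_mod_cast hn
      have hb := bern_up (le_of_lt hγ0) (le_of_lt hγ2) hn1 zero_le_one
      have h2 : (n:ℝ)^(γ-1) = (n:ℝ)^γ / (n:ℝ) := by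
        rw [Real.rpow_sub (by linarith), Real.rpow_one]
      rw [h2]
      have hd0' : (0:ℝ) ≤ (n:ℝ)^γ / (n:ℝ) := by positivity
      nlinarith
  have hB : ∀ᶠ n:ℕ in atTop, (2:ℝ)^(((n:ℝ)+1)^γ - (n:ℝ)^γ) ≤ 201/200 := by
    have hc : ContinuousAt (fun t:ℝ => (2:ℝ)^t) 0 :=
      Real.continuousAt_const_rpow (by norm_num)
    have h : Tendsto (fun n:ℕ => (2:ℝ)^(((n:ℝ)+1)^γ - (n:ℝ)^γ)) atTop (nhds ((2:ℝ)^(0:ℝ))) :=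
      hc.tendsto.comp hd0
    rw [Real.rpow_zero] at h
    exact h.eventually (eventually_le_nhds (by norm_num))
  obtain ⟨N2, hN2⟩ := eventually_atTop.1 hB
  set N0 := max (max N1 N2) 1 with hN0def
  have hN0_1 : 1 ≤ N0 := le_max_right _ _
  have hN0_N1 : N1 ≤ N0 := le_trans (le_max_left _ _) (le_max_left _ _)
  have hN0_N2 : N2 ≤ N0 := le_trans (le_max_right _ _) (le_max_left _ _)
  -- Step C : increment bound
  have hC : ∀ n, N0 ≤ n → phi (T^[n] x) ≤ (1/50)*β*Ψ n := by
    intro n hn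
    have hp : phi (T^[n] x) = S (n+1) x - S n x := by
      unfold S; rw [Finset.sum_range_succ]; ring
    have hup := (hA (n+1) (by omega)).2
    have hlo := (hA n (by omega)).1
    have hΨ1 : Ψ (n+1) = (2:ℝ)^(((n:ℝ)+1)^γ - (n:ℝ)^γ) * Ψ n := by
      simp only [hΨdef]
      rw [← Real.rpow_add two_pos]
      congr 1
      push_cast
      ring
    have hr := hN2 n (by omega)
    have h0 := hΨpos n
    rw [hp]
    rw [hΨ1] at hup
    nlinarith [mul_pos hβ h0, mul_le_mul_of_nonneg_right hr (le_of_lt (mul_pos hβ h0))]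
  -- numeric fact
  have hnum : (209:ℝ)/199 ≤ (2:ℝ)^((1:ℝ)/8) := by
    have h8 : ((2:ℝ)^((1:ℝ)/8))^(8:ℕ) = 2 := by
      rw [← Real.rpow_natCast ((2:ℝ)^((1:ℝ)/8)) 8, ← Real.rpow_mul (by norm_num)]
      norm_num
    apply le_of_pow_le_pow_left₀ (n := 8) (by norm_num)
      (le_of_lt (Real.rpow_pos_of_pos two_pos _))
    rw [h8]; norm_num
  -- Step D : bound on each run length
  have hK : ∀ j, N0 ≤ j → ((kap (T^[j] x) : ℝ)) ≤ (1/3)*(j:ℝ)^γ := by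
    intro j hj
    have hymem : T^[j] x ∈ Set.Ioc (0:ℝ) 1 := T_iter_mem hx j
    have hcoc : S (j + (kap (T^[j] x) + 1)) x
        = S j x + S (kap (T^[j] x) + 1) (T^[j] x) := S_cocycle x j _
    have hrun : S (kap (T^[j] x) + 1) (T^[j] x) ≤ 2 * phi (T^[j] x) :=
      S_run_le hymem (le_refl _)
    have h1 := (hA (j + (kap (T^[j] x) + 1)) (by omega)).1
    have h2 := (hA j (by omega)).2
    have h3 := hC j hj
    have hlin : (199/200)*β*Ψ (j + (kap (T^[j] x) + 1)) ≤ (209/200)*β*Ψ j := by linarith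
    have hΨm : Ψ (j + (kap (T^[j] x) + 1)) ≤ (209/199) * Ψ j := by
      nlinarith [hΨpos (j + (kap (T^[j] x) + 1)), hΨpos j]
    have hle : Ψ (j + (kap (T^[j] x) + 1)) ≤ (2:ℝ)^((1:ℝ)/8) * Ψ j := by
      nlinarith [hΨpos j]
    have hmexp : (((j + (kap (T^[j] x) + 1) : ℕ)):ℝ)^γ ≤ ((j:ℝ))^γ + 1/8 := by
      have h2' : (2:ℝ)^((1:ℝ)/8) * Ψ j = (2:ℝ)^((1:ℝ)/8 + (j:ℝ)^γ) := by
        simp only [hΨdef]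
        rw [Real.rpow_add two_pos]
      rw [h2'] at hle
      simp only [hΨdef] at hle
      have := (Real.rpow_le_rpow_left_iff (x := 2) one_lt_two).1 hle
      linarith
    have hj1 : (1:ℝ) ≤ (j:ℝ) := by exact_mod_cast le_trans hN0_1 hj
    have hcastm : (((j + (kap (T^[j] x) + 1) : ℕ)):ℝ)
        = (j:ℝ) + (((kap (T^[j] x)):ℝ) + 1) := by push_cast; ring
    rw [hcastm] at hmexp
    have hkey := key_exponent hγ1 hγ2 hj1 (by positivity) hmexp
    linarith
  -- Step E : final contradiction
  have hrt : Tendsto (fun n:ℕ => (n:ℝ)^γ) atTop atTop := (tendsto_rpow_atTop hγ0).comp hcast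
  have h2t : Tendsto (fun t:ℝ => (2:ℝ)^t) atTop atTop := by
    have he : (fun t:ℝ => (2:ℝ)^t) = fun t => Real.exp (Real.log 2 * t) := by
      funext t; rw [Real.rpow_def_of_pos two_pos]
    rw [he]
    exact Real.tendsto_exp_atTop.comp (Tendsto.const_mul_atTop (Real.log_pos one_lt_two) tendsto_id)
  have hΨt : Tendsto Ψ atTop atTop := h2t.comp hrt
  set C0 := S N0 x with hC0
  have hE1 : ∀ᶠ n:ℕ in atTop, C0 ≤ (99/200)*β*Ψ n := by
    filter_upwards [hΨt.eventually_ge_atTop ((200/(99*β))*C0)] with n h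
    have key : (99/200)*β*((200/(99*β))*C0) = C0 := by field_simp
    have := mul_le_mul_of_nonneg_left h (show (0:ℝ) ≤ (99/200)*β by positivity)
    linarith
  have hq14 : Tendsto (fun n:ℕ => (n:ℝ)^((1:ℝ)/4)) atTop atTop :=
    (tendsto_rpow_atTop (by norm_num)).comp hcast
  have htt : Tendsto (fun n:ℕ => (1/3)*(n:ℝ)^((1:ℝ)/2) - 6*(n:ℝ)^((1:ℝ)/4)) atTop atTop := by
    refine tendsto_atTop_mono' atTop ?_
      (Tendsto.const_mul_atTop (show (0:ℝ) < 1/3 by norm_num) hq14)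
    filter_upwards [hq14.eventually_ge_atTop 19] with n h
    have hsq : (n:ℝ)^((1:ℝ)/2) = ((n:ℝ)^((1:ℝ)/4))^(2:ℕ) := by
      rw [← Real.rpow_natCast ((n:ℝ)^((1:ℝ)/4)) 2, ← Real.rpow_mul (Nat.cast_nonneg n)]
      norm_num
    rw [hsq]
    nlinarith
  have hE2 : ∀ᶠ n:ℕ in atTop,
      Real.logb 2 (n:ℝ) + (1 - Real.logb 2 β) < (1/3)*(n:ℝ)^γ := by
    filter_upwards [htt.eventually_gt_atTop (1 - Real.logb 2 β), eventually_ge_atTop 1] with n h hn1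
    have hn1R : (1:ℝ) ≤ (n:ℝ) := by exact_mod_cast hn1
    have hlog : Real.log (n:ℝ) ≤ 4*(n:ℝ)^((1:ℝ)/4) := by
      have h4 := Real.log_le_rpow_div (Nat.cast_nonneg n) (show (0:ℝ) < 1/4 by norm_num)
      calc Real.log (n:ℝ) ≤ (n:ℝ)^((1:ℝ)/4)/(1/4) := h4
      _ = 4*(n:ℝ)^((1:ℝ)/4) := by ring
    have hlog2 : (2/3:ℝ) ≤ Real.log 2 := by linarith [Real.log_two_gt_d9]
    have hlogb : Real.logb 2 (n:ℝ) ≤ 6*(n:ℝ)^((1:ℝ)/4) := by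
      rw [Real.logb]
      have hln0 : (0:ℝ) ≤ Real.log (n:ℝ) := Real.log_nonneg hn1R
      calc Real.log (n:ℝ)/Real.log 2 ≤ (4*(n:ℝ)^((1:ℝ)/4))/(2/3) := by
            apply div_le_div₀ (by positivity) hlog (by norm_num) hlog2
      _ = 6*(n:ℝ)^((1:ℝ)/4) := by ring
    have hγh : (n:ℝ)^((1:ℝ)/2) ≤ (n:ℝ)^γ := by
      apply Real.rpow_le_rpow_of_exponent_le hn1R
      linarith
    linarith
  obtain ⟨n, hn⟩ := ((eventually_ge_atTop (N0+1)).and (hE1.and hE2)).exists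
  obtain ⟨hnN, hE1n, hE2n⟩ := hn
  set p := n - N0 with hpdef
  have hpn : N0 + p = n := by omega
  have hppos : 0 < p := by omega
  obtain ⟨i0, hi0mem, hi0max⟩ := Finset.exists_max_image (Finset.range p)
    (fun i => kap (T^[N0+i] x)) ⟨0, Finset.mem_range.2 hppos⟩
  have hjN0 : N0 ≤ N0 + i0 := Nat.le_add_right _ _
  have hjn : N0 + i0 ≤ n := by have := Finset.mem_range.1 hi0mem; omega
  have hsum : S p (T^[N0] x) ≤ (p:ℝ) * 2^(kap (T^[N0+i0] x)) := by
    unfold S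
    have hterm : ∀ i ∈ Finset.range p,
        phi (T^[i] (T^[N0] x)) ≤ (2:ℝ)^(kap (T^[N0+i0] x)) := by
      intro i hi
      rw [← Function.iterate_add_apply, add_comm i N0]
      rw [phi_eq (T_iter_mem hx _)]
      exact pow_le_pow_right₀ (by norm_num) (hi0max i hi)
    calc ∑ i ∈ Finset.range p, phi (T^[i] (T^[N0] x))
        ≤ ∑ _i ∈ Finset.range p, (2:ℝ)^(kap (T^[N0+i0] x)) := Finset.sum_le_sum hterm
    _ = (p:ℝ) * 2^(kap (T^[N0+i0] x)) := by
        rw [Finset.sum_const, Finset.card_range, nsmul_eq_mul]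
  have hSn : S n x = C0 + S p (T^[N0] x) := by
    rw [← hpn, S_cocycle]
  have h1 := (hA n (by omega)).1
  have h2K : (0:ℝ) < 2^(kap (T^[N0+i0] x)) := by positivity
  have hpnR : (p:ℝ) ≤ (n:ℝ) := by exact_mod_cast Nat.sub_le n N0
  have hhalf : (1/2)*β*Ψ n ≤ (n:ℝ) * 2^(kap (T^[N0+i0] x)) := by
    have := mul_le_mul_of_nonneg_right hpnR (le_of_lt h2K)
    linarith
  have hn1R : (1:ℝ) ≤ (n:ℝ) := by
    have h1n : (1:ℕ) ≤ n := by omega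
    exact_mod_cast h1n
  have hfin : Real.logb 2 β + (n:ℝ)^γ - 1
      ≤ Real.logb 2 (n:ℝ) + ((kap (T^[N0+i0] x) : ℕ):ℝ) := by
    have lhs_eq : (2:ℝ)^(Real.logb 2 β + (n:ℝ)^γ - 1) = (1/2)*β*Ψ n := by
      rw [Real.rpow_sub two_pos, Real.rpow_add two_pos,
        Real.rpow_logb two_pos (by norm_num) hβ, Real.rpow_one]
      simp only [hΨdef]
      ring
    have rhs_eq : (2:ℝ)^(Real.logb 2 (n:ℝ) + ((kap (T^[N0+i0] x) : ℕ):ℝ))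
        = (n:ℝ)*2^(kap (T^[N0+i0] x)) := by
      rw [Real.rpow_add two_pos,
        Real.rpow_logb two_pos (by norm_num) (by linarith), Real.rpow_natCast]
    rw [← Real.rpow_le_rpow_left_iff (x := 2) one_lt_two, lhs_eq, rhs_eq]
    exact hhalf
  have hKb := hK (N0+i0) hjN0
  have hjnγ : (((N0+i0:ℕ)):ℝ)^γ ≤ ((n:ℝ))^γ :=
    Real.rpow_le_rpow (Nat.cast_nonneg _) (by exact_mod_cast hjn) (le_of_lt hγ0)
  have hpos : (0:ℝ) ≤ (n:ℝ)^γ := Real.rpow_nonneg (Nat.cast_nonneg n) _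
  linarith
end

section
/- Let Ψ(n) = 2^{n^γ} with γ ≥ 1 and g(x) = 1/x. Then for every β ∈ (0, ∞], the set F_Ψ(β) = {x ∈ (0,1] : lim_{n→∞} S_n g(x)/Ψ(n) = β} is empty. -/
open Filter Set MeasureTheory
open scoped ENNReal Classical

/-! ### Auxiliary lemmas -/

lemma T_mem_aux {x : ℝ} (hx : x ∈ Set.Ioc (0:ℝ) 1) : T x ∈ Set.Ioc (0:ℝ) 1 := by
  obtain ⟨h0, h1⟩ := hx
  constructor
  · have h := Int.ceil_lt_add_one (2*x)
    unfold T; linarith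
  · have h := Int.le_ceil (2*x)
    unfold T; linarith

lemma T_le_aux {x : ℝ} (h0 : 0 < x) : T x ≤ 2 * x := by
  have h : (0:ℤ) < ⌈2*x⌉ := Int.ceil_pos.mpr (by linarith)
  have h' : (1:ℝ) ≤ (⌈2*x⌉ : ℝ) := by exact_mod_cast h
  unfold T; linarith

lemma T_eq_aux {x : ℝ} (h0 : 0 < x) (h : x ≤ 1/2) : T x = 2 * x := by
  have hc : ⌈2*x⌉ = 1 := by
    rw [Int.ceil_eq_iff]
    constructor <;> [push_cast; push_cast] <;> linarith
  unfold T; rw [hc]; push_cast; ring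

lemma iterate_mem_aux {x : ℝ} (hx : x ∈ Set.Ioc (0:ℝ) 1) (n : ℕ) :
    T^[n] x ∈ Set.Ioc (0:ℝ) 1 := by
  induction n with
  | zero => simpa
  | succ n ih => rw [Function.iterate_succ_apply']; exact T_mem_aux ih

lemma inv_step_aux {x : ℝ} (hx : x ∈ Set.Ioc (0:ℝ) 1) (n : ℕ)
    (h2 : 2 < (T^[n] x)⁻¹) : (T^[n+1] x)⁻¹ = (T^[n] x)⁻¹ / 2 := by
  have hy := iterate_mem_aux hx n
  have hy0 : 0 < T^[n] x := hy.1
  have hhalf : T^[n] x ≤ 1/2 := by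
    by_contra hcon
    push_neg at hcon
    have : (T^[n] x)⁻¹ < 2 := by
      rw [inv_lt_comm₀ hy0 (by norm_num)]
      linarith
    linarith
  rw [Function.iterate_succ_apply', T_eq_aux hy0 hhalf]
  rw [mul_inv]
  ring

lemma inv_mono_aux {x : ℝ} (hx : x ∈ Set.Ioc (0:ℝ) 1) (n : ℕ) :
    (T^[n] x)⁻¹ ≤ 2 * (T^[n+1] x)⁻¹ := by
  have hy := iterate_mem_aux hx n
  have hy0 : 0 < T^[n] x := hy.1
  have hT0 : 0 < T^[n+1] x := (iterate_mem_aux hx (n+1)).1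
  have hle : T^[n+1] x ≤ 2 * T^[n] x := by
    rw [Function.iterate_succ_apply']; exact T_le_aux hy0
  have h1 : (2 * T^[n] x)⁻¹ ≤ (T^[n+1] x)⁻¹ := by
    apply inv_anti₀ hT0 hle
  have h2 : (2 * T^[n] x)⁻¹ = (T^[n] x)⁻¹ / 2 := by rw [mul_inv]; ring
  rw [h2] at h1
  linarith

lemma sum_le_aux {x : ℝ} (hx : x ∈ Set.Ioc (0:ℝ) 1) (n : ℕ) :
    ∑ j ∈ Finset.range n, (T^[j] x)⁻¹ ≤ ((2:ℝ)^(n+1) - 2) * (T^[n] x)⁻¹ := by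
  induction n with
  | zero => simp
  | succ n ih =>
    rw [Finset.sum_range_succ]
    have h1 := inv_mono_aux hx n
    have h2 : 0 < (T^[n] x)⁻¹ := inv_pos.mpr (iterate_mem_aux hx n).1
    have h3 : 0 < (T^[n+1] x)⁻¹ := inv_pos.mpr (iterate_mem_aux hx (n+1)).1
    have hpow : (1:ℝ) ≤ (2:ℝ)^(n+1) := one_le_pow₀ (by norm_num)
    have hps : (2:ℝ)^(n+1+1) = 2 * 2^(n+1) := by ring
    nlinarith [mul_le_mul_of_nonneg_left h1 (show (0:ℝ) ≤ (2:ℝ)^(n+1) - 1 by linarith)]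

/-- If the inverses of the orbit are eventually `> 2`, we get a contradiction. -/
lemma key_aux {x : ℝ} (hx : x ∈ Set.Ioc (0:ℝ) 1)
    (h : ∀ᶠ n in atTop, 2 < (T^[n] x)⁻¹) : False := by
  rw [eventually_atTop] at h
  obtain ⟨N, hN⟩ := h
  have hdiv : ∀ k, (T^[N+k] x)⁻¹ = (T^[N] x)⁻¹ / 2^k := by
    intro k
    induction k with
    | zero => simp
    | succ k ih =>
      have h2 := hN (N+k) (by omega)
      have hs := inv_step_aux hx (N+k) h2
      rw [show N+(k+1) = (N+k)+1 by ring, hs, ih]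
      rw [pow_succ]; ring
  obtain ⟨k, hk⟩ := ((tendsto_pow_atTop_atTop_of_one_lt
      (show (1:ℝ) < 2 by norm_num)).eventually_gt_atTop ((T^[N] x)⁻¹ / 2)).exists
  have h2 := hN (N+k) (by omega)
  rw [hdiv k] at h2
  have hp : (0:ℝ) < 2^k := by positivity
  rw [lt_div_iff₀ hp] at h2
  nlinarith

lemma nat_le_rpow_aux {γ : ℝ} (hγ : 1 ≤ γ) (n : ℕ) : (n:ℝ) ≤ (n:ℝ)^γ := by
  rcases Nat.eq_zero_or_pos n with h | h
  · subst h; simpa using Real.rpow_nonneg le_rfl γ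
  · have h1 : (1:ℝ) ≤ (n:ℝ) := by exact_mod_cast h
    calc (n:ℝ) = (n:ℝ)^(1:ℝ) := (Real.rpow_one _).symm
      _ ≤ (n:ℝ)^γ := Real.rpow_le_rpow_of_exponent_le h1 hγ

lemma psi_ge_aux {γ : ℝ} (hγ : 1 ≤ γ) (n : ℕ) : (2:ℝ)^n ≤ (2:ℝ)^((n:ℝ)^γ) := by
  rw [← Real.rpow_natCast 2 n]
  exact Real.rpow_le_rpow_of_exponent_le one_le_two (nat_le_rpow_aux hγ n)

lemma psi_ratio_aux {γ : ℝ} (hγ : 1 ≤ γ) (n : ℕ) :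
    2 * (2:ℝ)^((n:ℝ)^γ) ≤ (2:ℝ)^(((n+1:ℕ):ℝ)^γ) := by
  have hkey : (n:ℝ)^γ + 1 ≤ ((n:ℝ)+1)^γ := by
    have h := NNReal.add_rpow_le_rpow_add (n : NNReal) 1 hγ
    have h' := NNReal.coe_le_coe.mpr h
    push_cast [NNReal.coe_rpow] at h'
    simpa [Real.one_rpow] using h'
  calc 2 * (2:ℝ)^((n:ℝ)^γ) = (2:ℝ)^((n:ℝ)^γ + 1) := by
        rw [Real.rpow_add two_pos, Real.rpow_one]; ring
    _ ≤ (2:ℝ)^(((n:ℝ)+1)^γ) := Real.rpow_le_rpow_of_exponent_le one_le_two hkey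
    _ = (2:ℝ)^(((n+1:ℕ):ℝ)^γ) := by push_cast; ring_nf

lemma psi_tendsto_aux {γ : ℝ} (hγ : 1 ≤ γ) :
    Tendsto (fun n : ℕ => (2:ℝ)^((n:ℝ)^γ)) atTop atTop :=
  tendsto_atTop_mono (psi_ge_aux hγ)
    (tendsto_pow_atTop_atTop_of_one_lt (show (1:ℝ) < 2 by norm_num))

lemma case_finite_aux {γ β : ℝ} (hγ : 1 ≤ γ) (hβ : 0 < β) {x : ℝ}
    (hx : x ∈ Set.Ioc (0:ℝ) 1)
    (h : Tendsto (fun n : ℕ => (∑ j ∈ Finset.range n, (T^[j] x)⁻¹) / (2:ℝ)^((n:ℝ)^γ))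
      atTop (nhds β)) : False := by
  set Ψ : ℕ → ℝ := fun n => (2:ℝ)^((n:ℝ)^γ) with hΨdef
  set u : ℕ → ℝ := fun n => (∑ j ∈ Finset.range n, (T^[j] x)⁻¹) / Ψ n with hudef
  have hΨpos : ∀ n, 0 < Ψ n := fun n => Real.rpow_pos_of_pos two_pos _
  have h' : Tendsto u atTop (nhds β) := h
  have hS : ∀ n, ∑ j ∈ Finset.range n, (T^[j] x)⁻¹ = u n * Ψ n := by
    intro n
    rw [hudef]
    exact (div_mul_cancel₀ _ (hΨpos n).ne').symm
  obtain ⟨N1, hN1⟩ := Metric.tendsto_atTop.mp h' (β/4) (by positivity)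
  obtain ⟨N2, hN2⟩ := eventually_atTop.mp ((psi_tendsto_aux hγ).eventually_gt_atTop (8/β))
  apply key_aux hx
  rw [eventually_atTop]
  refine ⟨max N1 N2, fun n hn => ?_⟩
  have hn1 : N1 ≤ n := le_trans (le_max_left _ _) hn
  have hn2 : N2 ≤ n := le_trans (le_max_right _ _) hn
  have hu1 := hN1 n hn1
  have hu2 := hN1 (n+1) (by omega)
  rw [Real.dist_eq, abs_lt] at hu1 hu2
  have hΨbig : 8/β < Ψ n := hN2 n hn2
  have hsum : u (n+1) * Ψ (n+1) = u n * Ψ n + (T^[n] x)⁻¹ := by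
    rw [← hS, ← hS, Finset.sum_range_succ]
  have hratio := psi_ratio_aux hγ n
  have hu1pos : 0 ≤ u (n+1) := by linarith
  have h5 : u (n+1) * (2 * Ψ n) ≤ u (n+1) * Ψ (n+1) :=
    mul_le_mul_of_nonneg_left hratio hu1pos
  have h6 : β/4 ≤ 2 * u (n+1) - u n := by linarith
  have h7 : (β/4) * Ψ n ≤ (2 * u (n+1) - u n) * Ψ n :=
    mul_le_mul_of_nonneg_right h6 (hΨpos n).le
  have h8 : (2:ℝ) < (β/4) * Ψ n := by
    have : (β/4) * (8/β) < (β/4) * Ψ n :=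
      mul_lt_mul_of_pos_left hΨbig (by positivity)
    have heq : (β/4) * (8/β) = 2 := by field_simp; ring
    linarith [heq ▸ this]
  have hexp : (2 * u (n+1) - u n) * Ψ n = u (n+1) * (2 * Ψ n) - u n * Ψ n := by ring
  linarith

lemma case_top_aux {γ : ℝ} (hγ : 1 ≤ γ) {x : ℝ}
    (hx : x ∈ Set.Ioc (0:ℝ) 1)
    (h : Tendsto (fun n : ℕ => (∑ j ∈ Finset.range n, (T^[j] x)⁻¹) / (2:ℝ)^((n:ℝ)^γ))
      atTop atTop) : False := by
  set Ψ : ℕ → ℝ := fun n => (2:ℝ)^((n:ℝ)^γ) with hΨdef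
  set u : ℕ → ℝ := fun n => (∑ j ∈ Finset.range n, (T^[j] x)⁻¹) / Ψ n with hudef
  have hΨpos : ∀ n, 0 < Ψ n := fun n => Real.rpow_pos_of_pos two_pos _
  have h' : Tendsto u atTop atTop := h
  have hS : ∀ n, ∑ j ∈ Finset.range n, (T^[j] x)⁻¹ = u n * Ψ n := by
    intro n
    rw [hudef]
    exact (div_mul_cancel₀ _ (hΨpos n).ne').symm
  obtain ⟨N1, hN1⟩ := eventually_atTop.mp (h'.eventually_ge_atTop 5)
  apply key_aux hx
  rw [eventually_atTop]
  refine ⟨N1, fun n hn => ?_⟩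
  have hu5 : (5:ℝ) ≤ u n := hN1 n hn
  have hsumle := sum_le_aux hx n
  rw [hS n] at hsumle
  have ha : 0 < (T^[n] x)⁻¹ := inv_pos.mpr (iterate_mem_aux hx n).1
  have hΨge : (2:ℝ)^n ≤ Ψ n := psi_ge_aux hγ n
  have hp : (0:ℝ) < (2:ℝ)^n := by positivity
  have hstep1 : (5:ℝ) * (2:ℝ)^n ≤ u n * Ψ n := by
    calc (5:ℝ) * (2:ℝ)^n ≤ u n * (2:ℝ)^n :=
          mul_le_mul_of_nonneg_right hu5 hp.le
      _ ≤ u n * Ψ n := mul_le_mul_of_nonneg_left hΨge (by linarith)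
  have hstep2 : ((2:ℝ)^(n+1) - 2) * (T^[n] x)⁻¹ ≤ 2 * (2:ℝ)^n * (T^[n] x)⁻¹ := by
    have : (2:ℝ)^(n+1) = 2 * (2:ℝ)^n := by ring
    nlinarith
  nlinarith

theorem saint_petersburg_stmt17 (γ : ℝ) (hγ : 1 ≤ γ) :
    (∀ β : ℝ, 0 < β →
      {x : ℝ | x ∈ Set.Ioc (0 : ℝ) 1 ∧
        Filter.Tendsto
          (fun n : ℕ => (∑ j ∈ Finset.range n, (T^[j] x)⁻¹) / (2 : ℝ) ^ ((n : ℝ) ^ γ))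
          Filter.atTop (nhds β)} = ∅) ∧
    {x : ℝ | x ∈ Set.Ioc (0 : ℝ) 1 ∧
      Filter.Tendsto
        (fun n : ℕ => (∑ j ∈ Finset.range n, (T^[j] x)⁻¹) / (2 : ℝ) ^ ((n : ℝ) ^ γ))
        Filter.atTop Filter.atTop} = ∅ := by
  constructor
  · intro β hβ
    rw [Set.eq_empty_iff_forall_notMem]
    rintro x ⟨hx, hlim⟩
    exact case_finite_aux hγ hβ hx hlim
  · rw [Set.eq_empty_iff_forall_notMem]
    rintro x ⟨hx, hlim⟩
    exact case_top_aux hγ hx hlim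
end
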